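/- Let N ∈ ℕ and Z = (z_{j,k}) ∈ ℂ^{N×N} be a square complex matrix. Then |per(Z)| ≤ N! · ∏_{k=1}^N ((1/N) ∑_{j=1}^N |z_{j,k}|²)^{1/2}. -/

import Mathlib

open Finset

namespace Stmt5Aux

variable {n : ℕ}

/-- permanent as a function of the columns -/
def F (x : Fin n → Fin n → ℝ) : ℝ := ∑ σ : Equiv.Perm (Fin n), ∏ k, x k (σ k)

def Q (v : Fin n → ℝ) : ℝ := ∑ r, v r ^ 2

def Kset (n : ℕ) : Set (Fin n → Fin n → ℝ) :=
  {x | (∀ k r, 0 ≤ x k r) ∧ ∀ k, Q (x k) = 1}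

lemma prod_update (x : Fin n → Fin n → ℝ) (i : Fin n) (c : Fin n → ℝ)
    (σ : Equiv.Perm (Fin n)) :
    ∏ k, (Function.update x i c) k (σ k)
      = c (σ i) * ∏ k ∈ univ.erase i, x k (σ k) := by
  rw [← Finset.mul_prod_erase univ _ (mem_univ i)]
  congr 1
  · simp
  · exact Finset.prod_congr rfl fun k hk => by
      rw [Function.update_of_ne (Finset.mem_erase.mp hk).1]

lemma F_update (x : Fin n → Fin n → ℝ) (i : Fin n) (c : Fin n → ℝ) :
    F (Function.update x i c)
      = ∑ σ : Equiv.Perm (Fin n), c (σ i) * ∏ k ∈ univ.erase i, x k (σ k) :=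
  Finset.sum_congr rfl fun σ _ => prod_update x i c σ

/-- cofactor vector for slot `i` -/
def cof (x : Fin n → Fin n → ℝ) (i : Fin n) (r : Fin n) : ℝ :=
  ∑ σ : Equiv.Perm (Fin n), if σ i = r then ∏ k ∈ univ.erase i, x k (σ k) else 0

lemma F_update_dot (x : Fin n → Fin n → ℝ) (i : Fin n) (c : Fin n → ℝ) :
    F (Function.update x i c) = ∑ r, c r * cof x i r := by
  rw [F_update]
  unfold cof
  simp only [Finset.mul_sum, mul_ite, mul_zero]
  rw [Finset.sum_comm]
  refine Finset.sum_congr rfl fun σ _ => ?_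
  rw [Finset.sum_ite_eq univ (σ i) (fun r => c r * ∏ k ∈ univ.erase i, x k (σ k))]
  simp

lemma cof_nonneg {x : Fin n → Fin n → ℝ} (hx : ∀ k r, 0 ≤ x k r) (i r : Fin n) :
    0 ≤ cof x i r := by
  refine Finset.sum_nonneg fun σ _ => ?_
  split
  · exact Finset.prod_nonneg fun k _ => hx k (σ k)
  · exact le_refl _

lemma F_comp_perm (x : Fin n → Fin n → ℝ) (τ : Equiv.Perm (Fin n)) :
    F (x ∘ τ) = F x := by
  unfold F
  rw [← Equiv.sum_comp (Equiv.mulRight τ⁻¹) (fun σ => ∏ k, x k (σ k))]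
  refine Finset.sum_congr rfl fun σ _ => ?_
  rw [← Equiv.prod_comp τ (fun m => x m ((Equiv.mulRight τ⁻¹ σ) m))]
  refine Finset.prod_congr rfl fun k _ => ?_
  simp [Equiv.Perm.mul_apply]

lemma F_update_avg (x : Fin n → Fin n → ℝ) (l : Fin n) (a b : Fin n → ℝ) (t : ℝ) :
    F (Function.update x l (fun r => (a r + b r) / t))
      = (F (Function.update x l a) + F (Function.update x l b)) / t := by
  rw [F_update, F_update, F_update, ← Finset.sum_add_distrib, Finset.sum_div]
  exact Finset.sum_congr rfl fun σ _ => by ring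


lemma update_mem_Kset {x : Fin n → Fin n → ℝ} (hx : x ∈ Kset n) (l : Fin n)
    (b : Fin n → ℝ) (hb0 : ∀ r, 0 ≤ b r) (hb1 : Q b = 1) :
    Function.update x l b ∈ Kset n := by
  constructor
  · intro k r
    rcases eq_or_ne k l with rfl | hkl
    · simpa using hb0 r
    · rw [Function.update_of_ne hkl]; exact hx.1 k r
  · intro k
    rcases eq_or_ne k l with rfl | hkl
    · simpa using hb1
    · rw [Function.update_of_ne hkl]; exact hx.2 k

lemma Kset_compact : IsCompact (Kset n) := by
  have hc1 : IsClosed {x : Fin n → Fin n → ℝ | ∀ k r, 0 ≤ x k r} := by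
    have he : {x : Fin n → Fin n → ℝ | ∀ k r, 0 ≤ x k r}
        = ⋂ k, ⋂ r, {x : Fin n → Fin n → ℝ | 0 ≤ x k r} := by
      ext x; simp [Set.mem_iInter]
    rw [he]
    exact isClosed_iInter fun k => isClosed_iInter fun r =>
      isClosed_le continuous_const ((continuous_apply r).comp (continuous_apply k))
  have hc2 : IsClosed {x : Fin n → Fin n → ℝ | ∀ k, Q (x k) = 1} := by
    have he : {x : Fin n → Fin n → ℝ | ∀ k, Q (x k) = 1}
        = ⋂ k, {x : Fin n → Fin n → ℝ | Q (x k) = 1} := by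
      ext x; simp [Set.mem_iInter]
    rw [he]
    refine isClosed_iInter fun k => isClosed_eq ?_ continuous_const
    exact continuous_finset_sum _ fun r _ =>
      (((continuous_apply r).comp (continuous_apply k)).pow 2)
  have hclosed : IsClosed (Kset n) := hc1.inter hc2
  have hsub : Kset n ⊆ Set.Icc (fun _ _ => (-1:ℝ)) (fun _ _ => 1) := by
    intro x hx
    have hb : ∀ k r, |x k r| ≤ 1 := by
      intro k r
      have h1 : x k r ^ 2 ≤ 1 := by
        have := Finset.single_le_sum (f := fun r => x k r ^ 2)
          (fun i _ => sq_nonneg _) (Finset.mem_univ r)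
        calc x k r ^ 2 ≤ Q (x k) := this
          _ = 1 := hx.2 k
      nlinarith [abs_nonneg (x k r), sq_abs (x k r)]
    constructor
    · intro k r
      show (-1:ℝ) ≤ x k r
      exact (abs_le.mp (hb k r)).1
    · intro k r
      show x k r ≤ (1:ℝ)
      exact (abs_le.mp (hb k r)).2
  exact IsCompact.of_isClosed_subset isCompact_Icc hclosed hsub

lemma F_continuous : Continuous (F (n := n)) :=
  continuous_finset_sum _ fun σ _ => continuous_finset_prod _ fun k _ =>
    (continuous_apply (σ k)).comp (continuous_apply k)

lemma F_const_col (v : Fin n → ℝ) :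
    F (fun _ => v) = (n.factorial : ℝ) * ∏ r, v r := by
  unfold F
  rw [Finset.sum_congr rfl fun σ _ => Equiv.prod_comp σ v, Finset.sum_const,
    Finset.card_univ, Fintype.card_perm, Fintype.card_fin, nsmul_eq_mul]

lemma prod_le_bound {v : Fin n → ℝ} (hn : 0 < n) (h0 : ∀ r, 0 ≤ v r)
    (h1 : Q v = 1) : ∏ r, v r ≤ Real.sqrt (n:ℝ)⁻¹ ^ n := by
  have hnne : (n:ℝ) ≠ 0 := by positivity
  have hsq : ∏ r, v r ^ 2 ≤ (n:ℝ)⁻¹ ^ n := by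
    have amgm := Real.geom_mean_le_arith_mean_weighted Finset.univ
      (fun _ => (n:ℝ)⁻¹) (fun r => v r ^ 2) (fun _ _ => by positivity)
      (by simp [Finset.card_univ, hnne]) (fun r _ => sq_nonneg _)
    rw [← Finset.mul_sum] at amgm
    have h1' : Q v = ∑ r, v r ^ 2 := rfl
    rw [← h1', h1, mul_one] at amgm
    rw [Real.finset_prod_rpow Finset.univ (fun r => v r ^ 2)
      (fun r _ => sq_nonneg _) ((n:ℝ)⁻¹)] at amgm
    have hpr : (0:ℝ) ≤ ∏ r, v r ^ 2 := Finset.prod_nonneg fun r _ => sq_nonneg _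
    have := pow_le_pow_left₀ (Real.rpow_nonneg hpr _) amgm n
    rwa [Real.rpow_inv_natCast_pow hpr hn.ne'] at this
  calc ∏ r, v r = Real.sqrt ((∏ r, v r) ^ 2) :=
        (Real.sqrt_sq (Finset.prod_nonneg fun r _ => h0 r)).symm
    _ = Real.sqrt (∏ r, v r ^ 2) := by rw [← Finset.prod_pow]
    _ ≤ Real.sqrt ((n:ℝ)⁻¹ ^ n) := Real.sqrt_le_sqrt hsq
    _ = Real.sqrt (n:ℝ)⁻¹ ^ n := by
        rw [show ((n:ℝ)⁻¹ ^ n) = (Real.sqrt (n:ℝ)⁻¹ ^ n) ^ 2 by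
          rw [← pow_mul, mul_comm n 2, pow_mul, Real.sq_sqrt (by positivity)]]
        exact Real.sqrt_sq (by positivity)

lemma update_update_swap (x : Fin n → Fin n → ℝ) {i j : Fin n} (hij : i ≠ j) :
    Function.update (Function.update x j (x i)) i (x j) = x ∘ (Equiv.swap i j) := by
  funext k
  rcases eq_or_ne k i with rfl | hki
  · simp [Equiv.swap_apply_left]
  · rcases eq_or_ne k j with rfl | hkj
    · rw [Function.update_of_ne hki, Function.update_self]
      simp [Equiv.swap_apply_right]
    · rw [Function.update_of_ne hki, Function.update_of_ne hkj]
      simp [Equiv.swap_apply_of_ne_of_ne hki hkj]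


set_option maxHeartbeats 1000000 in
lemma key (hn : 0 < n) {y : Fin n → Fin n → ℝ} (hy : y ∈ Kset n) :
    F y ≤ (n.factorial : ℝ) * Real.sqrt (n:ℝ)⁻¹ ^ n := by
  have hnne : (n:ℝ) ≠ 0 := by positivity
  set a : ℝ := Real.sqrt (n:ℝ)⁻¹ with ha
  have ha0 : 0 < a := Real.sqrt_pos.mpr (by positivity)
  have hflat : (fun _ _ => a : Fin n → Fin n → ℝ) ∈ Kset n := by
    refine ⟨fun _ _ => ha0.le, fun k => ?_⟩
    show ∑ _r : Fin n, a ^ 2 = 1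
    rw [Finset.sum_const, Finset.card_univ, Fintype.card_fin, nsmul_eq_mul, ha,
      Real.sq_sqrt (by positivity : (0:ℝ) ≤ (n:ℝ)⁻¹)]
    field_simp
  have hKne : (Kset n).Nonempty := ⟨_, hflat⟩
  obtain ⟨z, hzK, hz⟩ := Kset_compact.exists_isMaxOn hKne F_continuous.continuousOn
  set M : ℝ := F z with hM
  have hle : ∀ w ∈ Kset n, F w ≤ M := fun w hw => hz hw
  have hflatval : F (fun _ _ => a : Fin n → Fin n → ℝ) = (n.factorial : ℝ) * a ^ n := by
    rw [F_const_col]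
    congr 1
    rw [Finset.prod_const, Finset.card_univ, Fintype.card_fin]
  have hMpos : 0 < M := by
    have h1 := hle _ hflat
    rw [hflatval] at h1
    have h2 : (0:ℝ) < (n.factorial : ℝ) * a ^ n :=
      mul_pos (by exact_mod_cast n.factorial_pos) (pow_pos ha0 n)
    linarith
  suffices hMb : M ≤ (n.factorial : ℝ) * a ^ n by exact le_trans (hle y hy) hMb
  set A : Set (Fin n → Fin n → ℝ) := Kset n ∩ {w | F w = M} with hA
  have hAc : IsCompact A :=
    Kset_compact.inter_right (isClosed_eq F_continuous continuous_const)
  have hAne : A.Nonempty := ⟨z, hzK, rfl⟩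
  set g : (Fin n → Fin n → ℝ) → ℝ := fun w => ∑ r, (∑ k, w k r) ^ 2 with hg
  have hgc : Continuous g := continuous_finset_sum _ fun r _ =>
    (continuous_finset_sum _ fun k _ => (continuous_apply r).comp (continuous_apply k)).pow 2
  obtain ⟨x, hxA, hgmax⟩ := hAc.exists_isMaxOn hAne hgc.continuousOn
  obtain ⟨hxK, hxM⟩ := hxA
  -- the cofactor identity at the maximizer
  have star : ∀ l r, cof x l r = M * x l r := by
    intro l
    set w : Fin n → ℝ := cof x l with hw
    have hw0 : ∀ r, 0 ≤ w r := cof_nonneg hxK.1 l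
    have hrep : ∀ b : Fin n → ℝ, F (Function.update x l b) = ∑ r, b r * w r :=
      fun b => F_update_dot x l b
    have hxw : ∑ r, x l r * w r = M := by
      have h := hrep (x l)
      rw [Function.update_eq_self, hxM] at h
      exact h.symm
    have hub : ∀ b : Fin n → ℝ, (∀ r, 0 ≤ b r) → Q b = 1 → ∑ r, b r * w r ≤ M := by
      intro b hb0 hb1
      rw [← hrep b]
      exact hle _ (update_mem_Kset hxK l b hb0 hb1)
    have hQw : Q w ≠ 0 := by
      intro h
      have hwz := (Finset.sum_eq_zero_iff_of_nonneg
        (fun r (_ : r ∈ Finset.univ) => sq_nonneg (w r))).mp h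
      have h0 : ∑ r, x l r * w r = 0 := Finset.sum_eq_zero fun r _ => by
        rw [(pow_eq_zero_iff two_ne_zero).mp (hwz r (Finset.mem_univ r)), mul_zero]
      rw [hxw] at h0
      exact hMpos.ne' h0
    have hQw0 : 0 < Q w :=
      lt_of_le_of_ne (Finset.sum_nonneg fun r _ => sq_nonneg (w r)) (Ne.symm hQw)
    set β : ℝ := Real.sqrt (Q w) with hβ
    have hβ0 : 0 < β := Real.sqrt_pos.mpr hQw0
    have hβ2 : β ^ 2 = Q w := Real.sq_sqrt hQw0.le
    have hbQ : Q (fun r => w r / β) = 1 := by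
      show ∑ r, (w r / β) ^ 2 = 1
      rw [Finset.sum_congr rfl fun r _ => div_pow (w r) β 2, ← Finset.sum_div]
      rw [show (∑ r, w r ^ 2) = Q w from rfl, ← hβ2]
      exact div_self (by positivity)
    have hβM : β ≤ M := by
      have h1 := hub (fun r => w r / β) (fun r => div_nonneg (hw0 r) hβ0.le) hbQ
      have h2 : ∑ r, (w r / β) * w r = β := by
        rw [Finset.sum_congr rfl
          (fun r _ => by rw [div_mul_eq_mul_div, ← pow_two])]
        rw [← Finset.sum_div, show (∑ r, w r ^ 2) = Q w from rfl, ← hβ2, pow_two,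
          mul_div_assoc, div_self hβ0.ne', mul_one]
      rwa [h2] at h1
    have hexp : ∑ r, (w r - M * x l r) ^ 2 = Q w - M ^ 2 := by
      have e : ∀ r, (w r - M * x l r) ^ 2
          = w r ^ 2 - 2 * M * (x l r * w r) + M ^ 2 * (x l r ^ 2) := fun r => by ring
      have hQl : ∑ r, x l r ^ 2 = 1 := hxK.2 l
      rw [Finset.sum_congr rfl fun r _ => e r, Finset.sum_add_distrib,
        Finset.sum_sub_distrib, ← Finset.mul_sum, ← Finset.mul_sum, hxw, hQl]
      show Q w - 2 * M * M + M ^ 2 * 1 = Q w - M ^ 2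
      ring
    have hle0 : ∑ r, (w r - M * x l r) ^ 2 ≤ 0 := by
      rw [hexp, ← hβ2]
      nlinarith [hβ0, hβM]
    have hz0 := (Finset.sum_eq_zero_iff_of_nonneg
      (fun r (_ : r ∈ Finset.univ) => sq_nonneg (w r - M * x l r))).mp
      (le_antisymm hle0 (Finset.sum_nonneg fun r _ => sq_nonneg _))
    intro r
    have h := (pow_eq_zero_iff two_ne_zero).mp (hz0 r (Finset.mem_univ r))
    have : w r = M * x l r := by linarith
    exact this
  -- all columns of the maximizer are equal
  have eqcols : ∀ i j, x i = x j := by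
    intro i j
    by_contra hne
    have hij : i ≠ j := by rintro rfl; exact hne rfl
    set c : ℝ := ∑ r, x i r * x j r with hc
    have hc0 : 0 ≤ c := Finset.sum_nonneg fun r _ => mul_nonneg (hxK.1 i r) (hxK.1 j r)
    have hc1 : c < 1 := by
      have hex : ∃ r, x i r ≠ x j r := by
        by_contra hall
        push_neg at hall
        exact hne (funext hall)
      obtain ⟨r0, hr0⟩ := hex
      have hdpos : 0 < ∑ r, (x i r - x j r) ^ 2 := by
        refine Finset.sum_pos' (fun r _ => sq_nonneg _) ⟨r0, Finset.mem_univ r0, ?_⟩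
        exact lt_of_le_of_ne (sq_nonneg _)
          (Ne.symm (pow_ne_zero 2 (sub_ne_zero.mpr hr0)))
      have hdval : ∑ r, (x i r - x j r) ^ 2 = 2 - 2 * c := by
        have e : ∀ r, (x i r - x j r) ^ 2
            = x i r ^ 2 + x j r ^ 2 - 2 * (x i r * x j r) := fun r => by ring
        have hQi : ∑ r, x i r ^ 2 = 1 := hxK.2 i
        have hQj : ∑ r, x j r ^ 2 = 1 := hxK.2 j
        rw [Finset.sum_congr rfl fun r _ => e r, Finset.sum_sub_distrib,
          Finset.sum_add_distrib, ← Finset.mul_sum, hQi, hQj, ← hc]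
        ring
      rw [hdval] at hdpos
      linarith
    set s : ℝ := Real.sqrt (2 + 2 * c) with hs
    have hs2 : s ^ 2 = 2 + 2 * c := Real.sq_sqrt (by linarith)
    have hs0 : 0 < s := Real.sqrt_pos.mpr (by linarith)
    have hslt : s < 2 := by
      rw [hs, Real.sqrt_lt' (by norm_num : (0:ℝ) < 2)]
      nlinarith
    set u : Fin n → ℝ := fun r => (x i r + x j r) / s with hu
    have hu0 : ∀ r, 0 ≤ u r := fun r => div_nonneg
      (by have := hxK.1 i r; have := hxK.1 j r; linarith) hs0.le
    have hQp : ∑ r, (x i r + x j r) ^ 2 = 2 + 2 * c := by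
      have e : ∀ r, (x i r + x j r) ^ 2
          = x i r ^ 2 + x j r ^ 2 + 2 * (x i r * x j r) := fun r => by ring
      have hQi : ∑ r, x i r ^ 2 = 1 := hxK.2 i
      have hQj : ∑ r, x j r ^ 2 = 1 := hxK.2 j
      rw [Finset.sum_congr rfl fun r _ => e r, Finset.sum_add_distrib,
        Finset.sum_add_distrib, ← Finset.mul_sum, hQi, hQj, ← hc]
      ring
    have hQu : Q u = 1 := by
      show ∑ r, u r ^ 2 = 1
      have e : ∀ r, u r ^ 2 = (x i r + x j r) ^ 2 / s ^ 2 := fun r => by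
        rw [show u r = (x i r + x j r) / s from rfl, div_pow]
      rw [Finset.sum_congr rfl fun r _ => e r, ← Finset.sum_div, hQp, hs2]
      exact div_self (by linarith)
    have e1 : F (Function.update x j (x i)) = M * c := by
      rw [F_update_dot]
      have e : ∀ r, x i r * cof x j r = M * (x i r * x j r) := fun r => by
        rw [star j r]; ring
      rw [Finset.sum_congr rfl fun r _ => e r, ← Finset.mul_sum, ← hc]
    have e2 : F (Function.update x i (x j)) = M * c := by
      rw [F_update_dot]
      have e : ∀ r, x j r * cof x i r = M * (x i r * x j r) := fun r => by
        rw [star i r]; ring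
      rw [Finset.sum_congr rfl fun r _ => e r, ← Finset.mul_sum, ← hc]
    have eswap : F (Function.update (Function.update x j (x i)) i (x j)) = M := by
      rw [update_update_swap x hij, F_comp_perm, hxM]
    have hxiu : F (Function.update x i u) = (M + M * c) / s := by
      have h := F_update_avg x i (x i) (x j) s
      rw [← hu, Function.update_eq_self, hxM, e2] at h
      exact h
    have hzi : F (Function.update (Function.update x j (x i)) i u) = (M * c + M) / s := by
      have h := F_update_avg (Function.update x j (x i)) i (x i) (x j) s
      have hbase : Function.update (Function.update x j (x i)) i (x i)
          = Function.update x j (x i) := by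
        funext k
        rcases eq_or_ne k i with rfl | hki
        · rw [Function.update_self, Function.update_of_ne hij]
        · rw [Function.update_of_ne hki]
      rw [← hu, hbase, e1, eswap] at h
      exact h
    have hxu : F (Function.update (Function.update x i u) j u) = M := by
      have h3 := F_update_avg (Function.update x i u) j (x i) (x j) s
      have hb1 : Function.update (Function.update x i u) j (x j)
          = Function.update x i u := by
        funext k
        rcases eq_or_ne k j with rfl | hkj
        · rw [Function.update_self, Function.update_of_ne hij.symm]
        · rw [Function.update_of_ne hkj]
      have hb2 : Function.update (Function.update x i u) j (x i)
          = Function.update (Function.update x j (x i)) i u :=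
        Function.update_comm hij u (x i) x
      rw [← hu, hb1, hb2, hzi, hxiu] at h3
      have hss : s * s = 2 + 2 * c := by rw [← pow_two]; exact hs2
      have h2c : (2:ℝ) + 2 * c ≠ 0 := by linarith
      rw [h3, ← add_div, div_div, hss]
      field_simp
      ring
    set x' := Function.update (Function.update x i u) j u with hx'
    have hx'A : x' ∈ A :=
      ⟨update_mem_Kset (update_mem_Kset hxK i u hu0 hQu) j u hu0 hQu, hxu⟩
    have hcol : ∀ r, ∑ k, x' k r = (∑ k, x k r) + (2 / s - 1) * (x i r + x j r) := by
      intro r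
      have e : ∀ k, x' k r = x k r
          + ((if k = i then u r - x i r else 0) + (if k = j then u r - x j r else 0)) := by
        intro k
        rcases eq_or_ne k j with rfl | hkj
        · simp [hx', hij.symm]
        · rcases eq_or_ne k i with rfl | hki
          · simp [hx', Function.update_of_ne hij, hij]
          · simp [hx', Function.update_of_ne hkj, Function.update_of_ne hki, hki, hkj]
      rw [Finset.sum_congr rfl fun k _ => e k, Finset.sum_add_distrib,
        Finset.sum_add_distrib, Finset.sum_ite_eq' Finset.univ i fun _ => u r - x i r,
        Finset.sum_ite_eq' Finset.univ j fun _ => u r - x j r]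
      simp only [Finset.mem_univ, if_true]
      rw [show u r = (x i r + x j r) / s from rfl]
      ring
    set δ : ℝ := 2 / s - 1 with hδdef
    have hδ : 0 < δ := by
      have h1 : 1 < 2 / s := (one_lt_div hs0).mpr hslt
      simp only [hδdef]
      linarith
    have hTp : ∀ r, x i r + x j r ≤ ∑ k, x k r := by
      intro r
      have h := Finset.sum_le_sum_of_subset_of_nonneg
        (Finset.subset_univ ({i, j} : Finset (Fin n))) (fun k _ _ => hxK.1 k r)
      rwa [Finset.sum_insert (by simp [hij]), Finset.sum_singleton] at h
    have h1 : ∀ r, (∑ k, x k r) ^ 2 + 2 * δ * (x i r + x j r) ^ 2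
        + δ ^ 2 * (x i r + x j r) ^ 2 ≤ (∑ k, x' k r) ^ 2 := by
      intro r
      rw [hcol r]
      have h2 := hTp r
      have h3 : 0 ≤ x i r + x j r := by
        have := hxK.1 i r; have := hxK.1 j r; linarith
      nlinarith [mul_le_mul_of_nonneg_left h2
        (mul_nonneg (mul_nonneg (by norm_num : (0:ℝ) ≤ 2) hδ.le) h3)]
    have hsumeq : ∑ r, ((∑ k, x k r) ^ 2 + 2 * δ * (x i r + x j r) ^ 2
        + δ ^ 2 * (x i r + x j r) ^ 2)
        = (∑ r, (∑ k, x k r) ^ 2) + (2 * δ + δ ^ 2) * (2 + 2 * c) := by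
      rw [Finset.sum_add_distrib, Finset.sum_add_distrib, ← Finset.mul_sum,
        ← Finset.mul_sum, hQp]
      ring
    have hgineq : g x < g x' := by
      have h4 : (∑ r, (∑ k, x k r) ^ 2) + (2 * δ + δ ^ 2) * (2 + 2 * c)
          ≤ ∑ r, (∑ k, x' k r) ^ 2 := by
        rw [← hsumeq]
        exact Finset.sum_le_sum fun r _ => h1 r
      have h5 : 0 < (2 * δ + δ ^ 2) * (2 + 2 * c) :=
        mul_pos (add_pos (by linarith) (pow_pos hδ 2)) (by linarith)
      show (∑ r, (∑ k, x k r) ^ 2) < ∑ r, (∑ k, x' k r) ^ 2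
      linarith
    exact absurd (hgmax hx'A) (not_le.mpr hgineq)
  -- conclude via AM-GM
  set v : Fin n → ℝ := x ⟨0, hn⟩ with hv
  have hxeq : x = fun _ => v := funext fun k => eqcols k ⟨0, hn⟩
  have hMval : M = (n.factorial : ℝ) * ∏ r, v r := by
    rw [← hxM, hxeq, F_const_col]
  have hprod := prod_le_bound hn (fun r => hxK.1 _ r) (hxK.2 ⟨0, hn⟩)
  rw [hMval]
  exact mul_le_mul_of_nonneg_left (le_trans hprod (le_of_eq (by rw [ha])))
    (Nat.cast_nonneg _)

end Stmt5Aux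

set_option maxHeartbeats 800000 in
/-- Let `N ∈ ℕ` and `Z ∈ ℂ^{N×N}` square. Then
`|per(Z)| ≤ N! · ∏_{k=1}^N ((1/N) ∑_{j=1}^N |z_{j,k}|²)^{1/2}`,
where `per(Z) = ∑_{σ ∈ S_N} ∏_k z_{σ(k),k}`. -/
theorem stmt5 (N : ℕ) (Z : Matrix (Fin N) (Fin N) ℂ) :
    ‖∑ σ : Equiv.Perm (Fin N), ∏ k : Fin N, Z (σ k) k‖ ≤
      (N.factorial : ℝ) * ∏ k : Fin N, Real.sqrt ((N : ℝ)⁻¹ * ∑ j : Fin N, ‖Z j k‖ ^ 2) := by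
  rcases Nat.eq_zero_or_pos N with rfl | hN
  · simp
  by_cases hz : ∃ k0, ∑ j, ‖Z j k0‖ ^ 2 = 0
  · obtain ⟨k0, hk0⟩ := hz
    have hZ0 : ∀ j ∈ Finset.univ, ‖Z j k0‖ ^ 2 = 0 :=
      (Finset.sum_eq_zero_iff_of_nonneg (fun j _ => sq_nonneg _)).mp hk0
    have hzero : ∀ σ : Equiv.Perm (Fin N), ∏ k, Z (σ k) k = 0 := fun σ =>
      Finset.prod_eq_zero (Finset.mem_univ k0)
        (norm_eq_zero.mp ((pow_eq_zero_iff two_ne_zero).mp (hZ0 (σ k0) (Finset.mem_univ _))))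
    rw [Finset.sum_congr rfl fun σ _ => hzero σ, Finset.sum_const, smul_zero, norm_zero]
    exact mul_nonneg (Nat.cast_nonneg _)
      (Finset.prod_nonneg fun k _ => Real.sqrt_nonneg _)
  push_neg at hz
  have hpos : ∀ k, 0 < ∑ j, ‖Z j k‖ ^ 2 := fun k =>
    lt_of_le_of_ne (Finset.sum_nonneg fun j _ => sq_nonneg _) (Ne.symm (hz k))
  set c : Fin N → ℝ := fun k => Real.sqrt (∑ j, ‖Z j k‖ ^ 2) with hc
  have hcpos : ∀ k, 0 < c k := fun k => Real.sqrt_pos.mpr (hpos k)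
  set y : Fin N → Fin N → ℝ := fun k r => ‖Z r k‖ / c k with hy
  have hyK : y ∈ Stmt5Aux.Kset N := by
    constructor
    · intro k r
      exact div_nonneg (norm_nonneg _) (hcpos k).le
    · intro k
      show ∑ r, (‖Z r k‖ / c k) ^ 2 = 1
      rw [Finset.sum_congr rfl fun r _ => div_pow ‖Z r k‖ (c k) 2, ← Finset.sum_div]
      show (∑ r, ‖Z r k‖ ^ 2) / Real.sqrt (∑ j, ‖Z j k‖ ^ 2) ^ 2 = 1
      rw [Real.sq_sqrt (Finset.sum_nonneg fun j _ => sq_nonneg _)]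
      exact div_self (hpos k).ne'
  have hkey := Stmt5Aux.key hN hyK
  have h1 : ‖∑ σ : Equiv.Perm (Fin N), ∏ k, Z (σ k) k‖
      ≤ ∑ σ : Equiv.Perm (Fin N), ∏ k, ‖Z (σ k) k‖ :=
    le_trans (norm_sum_le _ _)
      (le_of_eq (Finset.sum_congr rfl fun σ _ => norm_prod _ _))
  have h2 : ∀ σ : Equiv.Perm (Fin N), ∏ k, ‖Z (σ k) k‖ = (∏ k, c k) * ∏ k, y k (σ k) := by
    intro σ
    rw [← Finset.prod_mul_distrib]
    refine Finset.prod_congr rfl fun k _ => ?_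
    show ‖Z (σ k) k‖ = c k * (‖Z (σ k) k‖ / c k)
    rw [mul_comm, div_mul_cancel₀ _ (hcpos k).ne']
  have h3 : (∑ σ : Equiv.Perm (Fin N), ∏ k, ‖Z (σ k) k‖)
      = (∏ k, c k) * Stmt5Aux.F y := by
    rw [Finset.sum_congr rfl fun σ _ => h2 σ, ← Finset.mul_sum]
    rfl
  have hcprod : 0 ≤ ∏ k, c k := Finset.prod_nonneg fun k _ => (hcpos k).le
  have h4 : ‖∑ σ : Equiv.Perm (Fin N), ∏ k, Z (σ k) k‖
      ≤ (∏ k, c k) * ((N.factorial : ℝ) * Real.sqrt (N:ℝ)⁻¹ ^ N) := by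
    refine le_trans h1 ?_
    rw [h3]
    exact mul_le_mul_of_nonneg_left hkey hcprod
  have h5 : (N.factorial : ℝ) * ∏ k, Real.sqrt ((N : ℝ)⁻¹ * ∑ j, ‖Z j k‖ ^ 2)
      = (∏ k, c k) * ((N.factorial : ℝ) * Real.sqrt (N:ℝ)⁻¹ ^ N) := by
    have e : ∀ k, Real.sqrt ((N : ℝ)⁻¹ * ∑ j, ‖Z j k‖ ^ 2)
        = Real.sqrt (N:ℝ)⁻¹ * c k := fun k => by
      rw [Real.sqrt_mul (by positivity) _]
    rw [Finset.prod_congr rfl fun k _ => e k, Finset.prod_mul_distrib,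
      Finset.prod_const, Finset.card_univ, Fintype.card_fin]
    ring
  rw [h5]
  exact h4
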